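/- (Row-stochasticity of the Kron accompanying matrix) Let B be the susceptance matrix of a connected weighted graph partitioned into loads and inverters. Then B_II is negative definite (hence invertible), and the matrix −B_II^{−1}B_IL ∈ ℝ^{m×n} is row-stochastic: all its entries are nonnegative and each row sums to 1 (equivalently, −B_II^{−1}B_IL·1_n = 1_m and the entries of B_II^{−1}B_IL are nonpositive). -/

import Mathlib

open Matrix

def suscGraph {V : Type*} (B : Matrix V V ℝ) : SimpleGraph V where
  Adj i j := i ≠ j ∧ 0 < B i j ∧ 0 < B j i
  symm := ⟨fun _ _ h => ⟨h.1.symm, h.2.2, h.2.1⟩⟩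
  loopless := ⟨fun _ h => h.1 rfl⟩

def IsSusceptance {V : Type*} [Fintype V] [DecidableEq V] (B : Matrix V V ℝ) : Prop :=
  B.IsSymm ∧ (∀ i j, i ≠ j → 0 ≤ B i j) ∧
    (∀ i, B i i = -∑ j ∈ Finset.univ.erase i, B i j) ∧ (suscGraph B).Connected

section Aux

variable {V : Type*} [Fintype V] [DecidableEq V]

lemma walk_prop (G : SimpleGraph V) (P : V → Prop)
    (h : ∀ a b, G.Adj a b → P a → P b) :
    ∀ {u v : V}, G.Reachable u v → P u → P v := by
  intro u v hr
  obtain ⟨p⟩ := hr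
  induction p with
  | nil => exact id
  | cons h' _ ih => exact fun hu => ih (h _ _ h' hu)

lemma susc_rowsum {B : Matrix V V ℝ} (hB : IsSusceptance B) (i : V) :
    ∑ j, B i j = 0 := by
  have h2 := Finset.add_sum_erase Finset.univ (B i) (Finset.mem_univ i)
  have := hB.2.2.1 i
  linarith

lemma susc_colsum {B : Matrix V V ℝ} (hB : IsSusceptance B) (j : V) :
    ∑ i, B i j = 0 := by
  have : ∀ i, B i j = B j i := fun i => hB.1.apply j i
  simp_rw [this]
  exact susc_rowsum hB j

lemma susc_quad {B : Matrix V V ℝ} (hB : IsSusceptance B) (z : V → ℝ) :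
    z ⬝ᵥ ((-B) *ᵥ z) = (∑ i, ∑ j, B i j * (z i - z j) ^ 2) / 2 := by
  have expand : ∀ i j : V, B i j * (z i - z j) ^ 2
      = (B i j * z i ^ 2 + B i j * z j ^ 2) - 2 * (z i * (B i j * z j)) := by
    intro i j; ring
  simp_rw [expand, Finset.sum_sub_distrib, Finset.sum_add_distrib]
  have h1 : ∑ i, ∑ j, B i j * z i ^ 2 = 0 := by
    simp_rw [← Finset.sum_mul, susc_rowsum hB]
    simp
  have h2 : ∑ i : V, ∑ j : V, B i j * z j ^ 2 = 0 := by
    rw [Finset.sum_comm]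
    simp_rw [← Finset.sum_mul]
    have : ∀ j : V, ∑ i, B i j = 0 := susc_colsum hB
    simp_rw [this]
    simp
  rw [h1, h2]
  have hlhs : z ⬝ᵥ ((-B) *ᵥ z) = ∑ i, ∑ j, -(B i j * (z i * z j)) := by
    simp only [dotProduct, mulVec, Matrix.neg_apply, Finset.mul_sum]
    apply Finset.sum_congr rfl
    intro i _
    apply Finset.sum_congr rfl
    intro j _
    ring
  rw [hlhs]
  rw [eq_div_iff (by norm_num : (2:ℝ) ≠ 0)]
  rw [zero_add, zero_sub, ← Finset.sum_neg_distrib, Finset.sum_mul]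
  apply Finset.sum_congr rfl
  intro i _
  rw [Finset.sum_mul, ← Finset.sum_neg_distrib]
  apply Finset.sum_congr rfl
  intro j _
  ring

end Aux

section Main

variable {n m : ℕ}

lemma mulVec_elim_inr (B : Matrix (Fin n ⊕ Fin m) (Fin n ⊕ Fin m) ℝ) (x : Fin m → ℝ) (i : Fin m) :
    (B *ᵥ Sum.elim 0 x) (Sum.inr i) = (B.toBlocks₂₂ *ᵥ x) i := by
  simp [mulVec, dotProduct, Fintype.sum_sum_type, toBlocks₂₂]

lemma dot_elim (B : Matrix (Fin n ⊕ Fin m) (Fin n ⊕ Fin m) ℝ) (x : Fin m → ℝ) :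
    (Sum.elim 0 x) ⬝ᵥ ((-B) *ᵥ (Sum.elim 0 x)) = x ⬝ᵥ ((-B.toBlocks₂₂) *ᵥ x) := by
  simp [dotProduct, mulVec, Fintype.sum_sum_type, toBlocks₂₂]

/-- The minimum principle. -/
lemma minPrinciple (hn : 0 < n)
    (B : Matrix (Fin n ⊕ Fin m) (Fin n ⊕ Fin m) ℝ) (hB : IsSusceptance B)
    (x : Fin m → ℝ) (hb : ∀ i, 0 ≤ -((B.toBlocks₂₂ *ᵥ x) i)) : ∀ i, 0 ≤ x i := by
  set z : (Fin n ⊕ Fin m) → ℝ := Sum.elim 0 x with hz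
  by_contra hcon
  push_neg at hcon
  obtain ⟨i0, hi0⟩ := hcon
  obtain ⟨u, -, hu⟩ := Finset.exists_min_image Finset.univ z ⟨Sum.inr i0, Finset.mem_univ _⟩
  have hmin : ∀ v, z u ≤ z v := fun v => hu v (Finset.mem_univ v)
  have hcneg : z u < 0 := lt_of_le_of_lt (hmin (Sum.inr i0)) hi0
  have step : ∀ a b, (suscGraph B).Adj a b → z a = z u → z b = z u := by
    intro a b hab ha
    obtain (l | i) := a
    · exfalso
      have : z (Sum.inl l) = 0 := rfl
      rw [this] at ha
      linarith [ha ▸ hcneg]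
    · have hsum : ∑ v ∈ Finset.univ.erase (Sum.inr i), B (Sum.inr i) v * (z v - z u)
          = (B *ᵥ z) (Sum.inr i) := by
        have hdiag := hB.2.2.1 (Sum.inr i)
        have h2 := Finset.add_sum_erase Finset.univ
            (fun v => B (Sum.inr i) v * z v) (Finset.mem_univ (Sum.inr i))
        have hmv : (B *ᵥ z) (Sum.inr i) = ∑ v, B (Sum.inr i) v * z v := rfl
        rw [hmv, ← h2]
        simp_rw [mul_sub, Finset.sum_sub_distrib, ← Finset.sum_mul, hdiag, ha]
        ring
      have hle : (B *ᵥ z) (Sum.inr i) ≤ 0 := by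
        have := hb i
        rw [← mulVec_elim_inr] at this
        linarith
      have hterm : ∀ v ∈ Finset.univ.erase (Sum.inr i),
          0 ≤ B (Sum.inr i) v * (z v - z u) := by
        intro v hv
        have hvne : v ≠ Sum.inr i := Finset.ne_of_mem_erase hv
        exact mul_nonneg (hB.2.1 _ _ (Ne.symm hvne)) (by linarith [hmin v])
      have hzero : ∀ v ∈ Finset.univ.erase (Sum.inr i),
          B (Sum.inr i) v * (z v - z u) = 0 := by
        rw [← Finset.sum_eq_zero_iff_of_nonneg hterm]
        have h0 : 0 ≤ ∑ v ∈ Finset.univ.erase (Sum.inr i),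
            B (Sum.inr i) v * (z v - z u) := Finset.sum_nonneg hterm
        rw [hsum] at h0 ⊢
        linarith
      have hbmem : b ∈ Finset.univ.erase (Sum.inr i) :=
        Finset.mem_erase.mpr ⟨(show Sum.inr i ≠ b ∧ 0 < B (Sum.inr i) b ∧ 0 < B b (Sum.inr i) from hab).1.symm, Finset.mem_univ _⟩
      have := hzero b hbmem
      have hpos : 0 < B (Sum.inr i) b := (show Sum.inr i ≠ b ∧ 0 < B (Sum.inr i) b ∧ 0 < B b (Sum.inr i) from hab).2.1
      have : z b - z u = 0 := by
        rcases mul_eq_zero.mp this with h | h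
        · linarith
        · exact h
      linarith
  have : z (Sum.inl ⟨0, hn⟩) = z u :=
    walk_prop (suscGraph B) (fun v => z v = z u) step
      (hB.2.2.2.preconnected u (Sum.inl ⟨0, hn⟩)) rfl
  have : (0:ℝ) = z u := this
  linarith

lemma susc_posdef (hn : 0 < n)
    (B : Matrix (Fin n ⊕ Fin m) (Fin n ⊕ Fin m) ℝ) (hB : IsSusceptance B) :
    (-B.toBlocks₂₂).PosDef := by
  rw [posDef_iff_dotProduct_mulVec]
  constructor
  · rw [Matrix.IsHermitian, conjTranspose_eq_transpose_of_trivial]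
    ext i j
    simp only [transpose_apply, Matrix.neg_apply, toBlocks₂₂, of_apply]
    rw [hB.1.apply]
  · intro x hx
    set z : (Fin n ⊕ Fin m) → ℝ := Sum.elim 0 x with hz
    have hform : star x ⬝ᵥ ((-B.toBlocks₂₂) *ᵥ x)
        = (∑ i, ∑ j, B i j * (z i - z j) ^ 2) / 2 := by
      rw [show (star x : Fin m → ℝ) = x from rfl, ← dot_elim, susc_quad hB]
    have hnn2 : ∀ (i j : Fin n ⊕ Fin m), 0 ≤ B i j * (z i - z j) ^ 2 := by
      intro i j
      rcases eq_or_ne i j with rfl | hij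
      · simp
      · exact mul_nonneg (hB.2.1 _ _ hij) (sq_nonneg _)
    have hnn : ∀ i ∈ (Finset.univ : Finset (Fin n ⊕ Fin m)),
        0 ≤ ∑ j, B i j * (z i - z j) ^ 2 :=
      fun i _ => Finset.sum_nonneg fun j _ => hnn2 i j
    have hge : 0 ≤ star x ⬝ᵥ ((-B.toBlocks₂₂) *ᵥ x) := by
      rw [hform]
      have := Finset.sum_nonneg hnn
      linarith
    rcases lt_or_eq_of_le hge with h | h
    · exact h
    exfalso
    have hssum : ∑ i, ∑ j, B i j * (z i - z j) ^ 2 = 0 := by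
      rw [hform] at h
      linarith
    have houter := (Finset.sum_eq_zero_iff_of_nonneg hnn).mp hssum
    have hallzero : ∀ i j, B i j * (z i - z j) ^ 2 = 0 := by
      intro i j
      have := houter i (Finset.mem_univ i)
      exact (Finset.sum_eq_zero_iff_of_nonneg (fun j _ => hnn2 i j)).mp this j (Finset.mem_univ j)
    have step : ∀ a b, (suscGraph B).Adj a b → z a = 0 → z b = 0 := by
      intro a b hab ha
      rcases mul_eq_zero.mp (hallzero a b) with h' | h'
      · linarith [(show a ≠ b ∧ 0 < B a b ∧ 0 < B b a from hab).2.1]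
      · have := sq_eq_zero_iff.mp h'
        linarith
    have hall : ∀ v, z v = 0 := fun v =>
      walk_prop (suscGraph B) (fun v => z v = 0) step
        (hB.2.2.2.preconnected (Sum.inl ⟨0, hn⟩) v) rfl
    apply hx
    funext i
    exact hall (Sum.inr i)

end Main

/-- Row-stochasticity of the Kron accompanying matrix: `B_II` is
negative definite (hence invertible), and `-B_II⁻¹ B_IL` is row-stochastic: its
entries are nonnegative and each of its rows sums to 1. -/
theorem kron_accompanying_rowStochastic {n m : ℕ} (hn : 0 < n) (hm : 0 < m)
    (B : Matrix (Fin n ⊕ Fin m) (Fin n ⊕ Fin m) ℝ) (hB : IsSusceptance B) :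
    (-B.toBlocks₂₂).PosDef ∧ IsUnit B.toBlocks₂₂.det ∧
    (∀ i j, 0 ≤ (-(B.toBlocks₂₂⁻¹ * B.toBlocks₂₁)) i j) ∧
    (∀ i, ∑ j, (-(B.toBlocks₂₂⁻¹ * B.toBlocks₂₁)) i j = 1) := by
  have hpd := susc_posdef hn B hB
  have hdetneg : IsUnit (-B.toBlocks₂₂).det := hpd.det_pos.ne'.isUnit
  have hdet : IsUnit B.toBlocks₂₂.det := by
    have hdp := hpd.det_pos
    refine isUnit_iff_ne_zero.mpr fun h => ?_
    rw [det_neg, h, mul_zero] at hdp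
    exact lt_irrefl 0 hdp
  refine ⟨hpd, hdet, ?_, ?_⟩
  · -- nonneg entries
    intro i j
    have key : ∀ i, 0 ≤ ((-(B.toBlocks₂₂⁻¹ * B.toBlocks₂₁)) *ᵥ Pi.single j 1) i := by
      apply minPrinciple hn B hB
      intro i
      have : B.toBlocks₂₂ *ᵥ ((-(B.toBlocks₂₂⁻¹ * B.toBlocks₂₁)) *ᵥ Pi.single j 1)
          = (-B.toBlocks₂₁) *ᵥ Pi.single j 1 := by
        rw [mulVec_mulVec, Matrix.mul_neg, ← Matrix.mul_assoc,
          Matrix.mul_nonsing_inv _ hdet, Matrix.one_mul]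
      rw [this]
      rw [mulVec_single]
      simp only [Pi.smul_apply, col_apply, Matrix.neg_apply, op_smul_eq_mul, mul_one, neg_neg]
      exact hB.2.1 _ _ (by simp)
    have := key i
    simpa using this
  · -- row sums
    intro i
    have hones : B.toBlocks₂₁ *ᵥ (fun _ => (1:ℝ)) = B.toBlocks₂₂ *ᵥ (fun _ => (-1:ℝ)) := by
      funext k
      have := susc_rowsum hB (Sum.inr k)
      rw [Fintype.sum_sum_type] at this
      simp only [mulVec, dotProduct, toBlocks₂₁, toBlocks₂₂, of_apply, mul_one, mul_neg]
      rw [Finset.sum_neg_distrib]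
      linarith
    have : (-(B.toBlocks₂₂⁻¹ * B.toBlocks₂₁)) *ᵥ (fun _ => (1:ℝ)) = fun _ => (1:ℝ) := by
      rw [Matrix.neg_mulVec, ← mulVec_mulVec, hones, mulVec_mulVec,
        Matrix.nonsing_inv_mul _ hdet, Matrix.one_mulVec]
      funext k; simp
    have := congrFun this i
    simp only [mulVec, dotProduct, mul_one] at this
    exact this
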